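/- There exists a constant C > 0 such that for every smooth function u : 𝕋² → ℝ² one has ‖u‖_{L⁴(𝕋²)}⁴ ≤ C ‖u‖_{H^{0,1}}² ‖u‖_{H^{1,1}}². Consequently, any u : [0,T] → C^∞(𝕋²;ℝ²) that is bounded in L^∞([0,T];H^{0,1}) and in L²([0,T];H^{1,1}) is bounded in L⁴([0,T];L⁴(𝕋²)), with ∫₀ᵀ‖u(t)‖_{L⁴}⁴ dt ≤ C (sup_{t∈[0,T]} ‖u(t)‖_{H^{0,1}}²) ∫₀ᵀ ‖u(t)‖_{H^{1,1}}² dt. -/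

import Mathlib

open MeasureTheory Real

/-- The partial derivative `∂₁` on `ℝ²`. -/
noncomputable def pd1 {E : Type*} [NormedAddCommGroup E] [NormedSpace ℝ E]
    (g : ℝ × ℝ → E) (x : ℝ × ℝ) : E := fderiv ℝ g x (1, 0)

/-- The partial derivative `∂₂` on `ℝ²`. -/
noncomputable def pd2 {E : Type*} [NormedAddCommGroup E] [NormedSpace ℝ E]
    (g : ℝ × ℝ → E) (x : ℝ × ℝ) : E := fderiv ℝ g x (0, 1)

/-- The Euclidean dot product on `ℝ²`. -/
def pdot (a b : ℝ × ℝ) : ℝ := a.1 * b.1 + a.2 * b.2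

/-- The `L²(ℝ²)` norm of a vector field. -/
noncomputable def L2v (g : ℝ × ℝ → ℝ × ℝ) : ℝ :=
  Real.sqrt (∫ x : ℝ × ℝ, pdot (g x) (g x))

/-- The `L²(ℝ²)` norm of a scalar function. -/
noncomputable def L2s (f : ℝ × ℝ → ℝ) : ℝ :=
  Real.sqrt (∫ x : ℝ × ℝ, (f x) ^ 2)

/-- The convection term `u·∇v = u¹∂₁v + u²∂₂v` for vector fields on `ℝ²`. -/
noncomputable def convV (u v : ℝ × ℝ → ℝ × ℝ) (x : ℝ × ℝ) : ℝ × ℝ :=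
  (u x).1 • pd1 v x + (u x).2 • pd2 v x

/-- Pointwise divergence-free: `∂₁u¹ + ∂₂u² = 0`. -/
def DivFree (u : ℝ × ℝ → ℝ × ℝ) : Prop :=
  ∀ x, pd1 (fun y => (u y).1) x + pd2 (fun y => (u y).2) x = 0

/-- The fundamental cell of the torus `𝕋² = (ℝ/2πℤ)²`. -/
noncomputable def Q2 : Set (ℝ × ℝ) :=
  (Set.Ioc (0:ℝ) (2 * Real.pi)) ×ˢ (Set.Ioc (0:ℝ) (2 * Real.pi))

/-- A function on `ℝ²` is `2π`-periodic in each variable (i.e. it is a function on `𝕋²`). -/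
def PeriodicT {E : Type*} (g : ℝ × ℝ → E) : Prop :=
  ∀ x : ℝ × ℝ, g (x.1 + 2 * Real.pi, x.2) = g x ∧ g (x.1, x.2 + 2 * Real.pi) = g x

/-- The `L²(𝕋²)` inner product of two vector fields. -/
noncomputable def innerT (g h : ℝ × ℝ → ℝ × ℝ) : ℝ := ∫ x in Q2, pdot (g x) (h x)

/-- The `L²(𝕋²)` norm of a vector field. -/
noncomputable def L2T (g : ℝ × ℝ → ℝ × ℝ) : ℝ := Real.sqrt (∫ x in Q2, pdot (g x) (g x))

/-- The squared anisotropic norm `‖g‖_{H^{0,1}}²` on `𝕋²`. -/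
noncomputable def H01sqT (g : ℝ × ℝ → ℝ × ℝ) : ℝ := L2T g ^ 2 + L2T (pd2 g) ^ 2

/-- The squared anisotropic norm `‖g‖_{H^{1,1}}²` on `𝕋²`. -/
noncomputable def H11sqT (g : ℝ × ℝ → ℝ × ℝ) : ℝ :=
  L2T g ^ 2 + L2T (pd1 g) ^ 2 + L2T (pd2 g) ^ 2 + L2T (pd1 (pd2 g)) ^ 2

section AuxLemmas

open Set

local notation "I2" => Set.Ioc (0:ℝ) (2 * Real.pi)

lemma twopi_pos : (0:ℝ) < 2 * Real.pi := by positivity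

lemma pdot_self_nonneg (a : ℝ × ℝ) : 0 ≤ pdot a a := by
  simp only [pdot]; nlinarith [sq_nonneg a.1, sq_nonneg a.2]

lemma abs_pdot_le (a b : ℝ × ℝ) : |pdot a b| ≤ (pdot a a + pdot b b) / 2 := by
  rw [abs_le]
  constructor <;> simp only [pdot] <;>
    nlinarith [sq_nonneg (a.1 - b.1), sq_nonneg (a.1 + b.1), sq_nonneg (a.2 - b.2),
      sq_nonneg (a.2 + b.2)]

lemma measurableSet_Q2 : MeasurableSet Q2 :=
  measurableSet_Ioc.prod measurableSet_Ioc

lemma intQ2 {f : ℝ × ℝ → ℝ} (hf : Continuous f) : MeasureTheory.IntegrableOn f Q2 := by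
  have h : MeasureTheory.IntegrableOn f
      ((Set.Icc (0:ℝ) (2 * Real.pi)) ×ˢ (Set.Icc (0:ℝ) (2 * Real.pi))) :=
    hf.continuousOn.integrableOn_compact (isCompact_Icc.prod isCompact_Icc)
  exact h.mono_set (Set.prod_mono Set.Ioc_subset_Icc_self Set.Ioc_subset_Icc_self)

lemma intQ2_prod {f : ℝ × ℝ → ℝ} (hf : MeasureTheory.IntegrableOn f Q2) :
    MeasureTheory.Integrable f
      (((volume : MeasureTheory.Measure ℝ).restrict I2).prod
        ((volume : MeasureTheory.Measure ℝ).restrict I2)) := by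
  rw [MeasureTheory.Measure.prod_restrict]
  rw [MeasureTheory.IntegrableOn, Q2, MeasureTheory.Measure.volume_eq_prod] at hf
  exact hf

lemma fubQ2 {f : ℝ × ℝ → ℝ} (hf : MeasureTheory.IntegrableOn f Q2) :
    ∫ z in Q2, f z = ∫ t in I2, ∫ s in I2, f (s, t) := by
  have h1 : ∫ z in Q2, f z = ∫ s in I2, ∫ t in I2, f (s, t) := by
    rw [Q2, MeasureTheory.Measure.volume_eq_prod]
    refine MeasureTheory.setIntegral_prod f ?_
    rw [MeasureTheory.IntegrableOn, Q2, MeasureTheory.Measure.volume_eq_prod] at hf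
    exact hf
  rw [h1]
  refine MeasureTheory.integral_integral_swap ?_
  have := intQ2_prod hf
  refine this.congr ?_
  filter_upwards with z
  rfl

lemma marginalQ2 {f : ℝ × ℝ → ℝ} (hf : MeasureTheory.IntegrableOn f Q2) :
    MeasureTheory.IntegrableOn (fun t => ∫ s in I2, f (s, t)) I2 :=
  (intQ2_prod hf).integral_prod_right

end AuxLemmas
section CalcLemmas

open Set

lemma contDiff_pd1 {E : Type*} [NormedAddCommGroup E] [NormedSpace ℝ E]
    {F : ℝ × ℝ → E} (hF : ContDiff ℝ (⊤ : ℕ∞) F) : ContDiff ℝ (⊤ : ℕ∞) (pd1 F) :=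
  (hF.fderiv_right (m := (⊤ : ℕ∞)) (by norm_cast)).clm_apply contDiff_const

lemma contDiff_pd2 {E : Type*} [NormedAddCommGroup E] [NormedSpace ℝ E]
    {F : ℝ × ℝ → E} (hF : ContDiff ℝ (⊤ : ℕ∞) F) : ContDiff ℝ (⊤ : ℕ∞) (pd2 F) :=
  (hF.fderiv_right (m := (⊤ : ℕ∞)) (by norm_cast)).clm_apply contDiff_const

lemma slice1 {F : ℝ × ℝ → ℝ} (hF : Differentiable ℝ F) (b a : ℝ) :
    HasDerivAt (fun s => F (s, b)) (pd1 F (a, b)) a := by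
  have h : HasDerivAt (fun s : ℝ => (s, b)) ((1:ℝ), (0:ℝ)) a :=
    (hasDerivAt_id a).prodMk (hasDerivAt_const a b)
  simpa [pd1, Function.comp_def] using ((hF (a, b)).hasFDerivAt.comp_hasDerivAt a h)

lemma slice2 {F : ℝ × ℝ → ℝ} (hF : Differentiable ℝ F) (a b : ℝ) :
    HasDerivAt (fun t => F (a, t)) (pd2 F (a, b)) b := by
  have h : HasDerivAt (fun t : ℝ => (a, t)) ((0:ℝ), (1:ℝ)) b :=
    (hasDerivAt_const b a).prodMk (hasDerivAt_id b)
  simpa [pd2, Function.comp_def] using ((hF (a, b)).hasFDerivAt.comp_hasDerivAt b h)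

lemma contDiff_pdot {w v : ℝ × ℝ → ℝ × ℝ} (hw : ContDiff ℝ (⊤ : ℕ∞) w)
    (hv : ContDiff ℝ (⊤ : ℕ∞) v) : ContDiff ℝ (⊤ : ℕ∞) (fun x => pdot (w x) (v x)) := by
  simp only [pdot]
  exact ((contDiff_fst.comp hw).mul (contDiff_fst.comp hv)).add
    ((contDiff_snd.comp hw).mul (contDiff_snd.comp hv))

lemma pd_pdot (e : ℝ × ℝ) {w v : ℝ × ℝ → ℝ × ℝ} (hw : Differentiable ℝ w)
    (hv : Differentiable ℝ v) (x : ℝ × ℝ) :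
    fderiv ℝ (fun y => pdot (w y) (v y)) x e
      = pdot (fderiv ℝ w x e) (v x) + pdot (w x) (fderiv ℝ v x e) := by
  have h := (((hw x).hasFDerivAt.fst.mul (hv x).hasFDerivAt.fst).add
    ((hw x).hasFDerivAt.snd.mul (hv x).hasFDerivAt.snd))
  have h2 : fderiv ℝ (fun y => (w y).1 * (v y).1 + (w y).2 * (v y).2) x = _ := h.fderiv
  simp only [pdot]
  rw [h2]
  simp only [ContinuousLinearMap.add_apply, ContinuousLinearMap.smul_apply,
    ContinuousLinearMap.coe_comp', Function.comp_apply, ContinuousLinearMap.coe_fst',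
    ContinuousLinearMap.coe_snd', smul_eq_mul]
  ring

end CalcLemmas
section Agmon

open Set MeasureTheory

lemma agmon1 {g g' : ℝ → ℝ} (hd : ∀ t, HasDerivAt g (g' t) t) (hg : Continuous g)
    (hg' : Continuous g') {x : ℝ} (hx : x ∈ Set.Icc (0:ℝ) (2 * Real.pi)) :
    |g x| ≤ (2 * Real.pi)⁻¹ * (∫ y in Set.Ioc (0:ℝ) (2 * Real.pi), |g y|)
      + ∫ t in Set.Ioc (0:ℝ) (2 * Real.pi), |g' t| := by
  have hπ : (0:ℝ) < 2 * Real.pi := twopi_pos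
  set K := ∫ t in Set.Ioc (0:ℝ) (2 * Real.pi), |g' t| with hK
  have hKint : IntegrableOn (fun t => |g' t|) (Set.Ioc (0:ℝ) (2 * Real.pi)) :=
    (hg'.abs).integrableOn_Ioc
  have key : ∀ y ∈ Set.Ioc (0:ℝ) (2 * Real.pi), |g x| - K ≤ |g y| := by
    intro y hy
    have heq : ∫ t in y..x, g' t = g x - g y :=
      intervalIntegral.integral_eq_sub_of_hasDerivAt (fun t _ => hd t)
        (hg'.intervalIntegrable y x)
    have h1 : |∫ t in y..x, g' t| ≤ K := by
      rw [← Real.norm_eq_abs, intervalIntegral.norm_intervalIntegral_eq]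
      refine le_trans (norm_integral_le_integral_norm _) ?_
      simp only [Real.norm_eq_abs, hK]
      refine setIntegral_mono_set hKint (Filter.Eventually.of_forall fun t => abs_nonneg _)
        (HasSubset.Subset.eventuallyLE ?_)
      rw [Set.uIoc]
      exact Set.Ioc_subset_Ioc (le_inf hy.1.le hx.1) (sup_le hy.2 hx.2)
    have h2 : |g x| ≤ |g y| + |∫ t in y..x, g' t| := by
      rw [heq]
      calc |g x| = |g y + (g x - g y)| := by ring_nf
        _ ≤ |g y| + |g x - g y| := abs_add_le _ _
    linarith
  have hcint : IntegrableOn (fun _ : ℝ => |g x| - K) (Set.Ioc (0:ℝ) (2 * Real.pi)) :=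
    integrableOn_const measure_Ioc_lt_top.ne
  have hmono := setIntegral_mono_on hcint ((hg.abs).integrableOn_Ioc) measurableSet_Ioc key
  rw [setIntegral_const] at hmono
  have hvol : ((volume : Measure ℝ) (Set.Ioc (0:ℝ) (2 * Real.pi))).toReal = 2 * Real.pi := by
    rw [Real.volume_Ioc]
    rw [sub_zero, ENNReal.toReal_ofReal hπ.le]
  rw [measureReal_def, hvol, smul_eq_mul] at hmono
  have h3 : |g x| - K ≤ (2 * Real.pi)⁻¹ * ∫ y in Set.Ioc (0:ℝ) (2 * Real.pi), |g y| := by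
    have h4 : |g x| - K = (2 * Real.pi)⁻¹ * ((2 * Real.pi) * (|g x| - K)) := by
      field_simp
    rw [h4]
    exact mul_le_mul_of_nonneg_left hmono (by positivity)
  linarith

end Agmon
section Agmon2

open Set MeasureTheory

lemma agmon2 {F : ℝ × ℝ → ℝ} (hF : ContDiff ℝ (⊤ : ℕ∞) F) {p : ℝ × ℝ} (hp : p ∈ Q2) :
    |F p| ≤ (∫ z in Q2, |F z|) + (∫ z in Q2, |pd1 F z|)
      + (∫ z in Q2, |pd2 F z|) + ∫ z in Q2, |pd1 (pd2 F) z| := by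
  have hπ : (0:ℝ) < 2 * Real.pi := twopi_pos
  set I := Set.Ioc (0:ℝ) (2 * Real.pi) with hI
  obtain ⟨hp1, hp2⟩ : p.1 ∈ I ∧ p.2 ∈ I := hp
  have ha : p.1 ∈ Set.Icc (0:ℝ) (2 * Real.pi) := Set.Ioc_subset_Icc_self hp1
  have hb : p.2 ∈ Set.Icc (0:ℝ) (2 * Real.pi) := Set.Ioc_subset_Icc_self hp2
  set a := p.1
  set b := p.2
  -- differentiability and continuity facts
  have hFd : Differentiable ℝ F := hF.differentiable (by norm_cast)
  have hF2 : ContDiff ℝ (⊤ : ℕ∞) (pd2 F) := contDiff_pd2 hF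
  have hF2d : Differentiable ℝ (pd2 F) := hF2.differentiable (by norm_cast)
  have hFc : Continuous F := hF.continuous
  have hF1c : Continuous (pd1 F) := (contDiff_pd1 hF).continuous
  have hF2c : Continuous (pd2 F) := hF2.continuous
  have hF12c : Continuous (pd1 (pd2 F)) := (contDiff_pd1 hF2).continuous
  -- Step A : Agmon in the second variable
  have stepA : |F (a, b)| ≤ (2 * Real.pi)⁻¹ * (∫ t in I, |F (a, t)|)
      + ∫ t in I, |pd2 F (a, t)| := by
    refine agmon1 (g := fun t => F (a, t)) (g' := fun t => pd2 F (a, t))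
      (fun t => slice2 hFd a t) (hFc.comp (continuous_const.prodMk continuous_id))
      (hF2c.comp (continuous_const.prodMk continuous_id)) hb
  -- iterated integrals
  set T00 := ∫ t in I, ∫ s in I, |F (s, t)| with hT00
  set T10 := ∫ t in I, ∫ s in I, |pd1 F (s, t)| with hT10
  set T01 := ∫ t in I, ∫ s in I, |pd2 F (s, t)| with hT01
  set T11 := ∫ t in I, ∫ s in I, |pd1 (pd2 F) (s, t)| with hT11
  -- Step B : bound ∫ t, |F (a,t)|
  have stepB : (∫ t in I, |F (a, t)|) ≤ (2 * Real.pi)⁻¹ * T00 + T10 := by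
    have hmarg0 : IntegrableOn (fun t => ∫ s in I, |F (s, t)|) I :=
      marginalQ2 (f := fun z => |F z|) (intQ2 hFc.abs)
    have hmarg1 : IntegrableOn (fun t => ∫ s in I, |pd1 F (s, t)|) I :=
      marginalQ2 (f := fun z => |pd1 F z|) (intQ2 hF1c.abs)
    have hmono : (∫ t in I, |F (a, t)|)
        ≤ ∫ t in I, ((2 * Real.pi)⁻¹ * (∫ s in I, |F (s, t)|) + ∫ s in I, |pd1 F (s, t)|) := by
      refine setIntegral_mono_on
        ((hFc.comp (continuous_const.prodMk continuous_id)).abs.integrableOn_Ioc)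
        (((hmarg0.const_mul _)).add hmarg1) measurableSet_Ioc ?_
      intro t ht
      have := agmon1 (g := fun s => F (s, t)) (g' := fun s => pd1 F (s, t))
        (fun s => slice1 hFd t s) (hFc.comp (continuous_id.prodMk continuous_const))
        (hF1c.comp (continuous_id.prodMk continuous_const)) ha
      simpa using this
    rw [integral_add (hmarg0.const_mul _) hmarg1, integral_const_mul] at hmono
    exact hmono
  -- Step C : bound ∫ t, |pd2 F (a,t)|
  have stepC : (∫ t in I, |pd2 F (a, t)|) ≤ (2 * Real.pi)⁻¹ * T01 + T11 := by
    have hmarg0 : IntegrableOn (fun t => ∫ s in I, |pd2 F (s, t)|) I :=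
      marginalQ2 (f := fun z => |pd2 F z|) (intQ2 hF2c.abs)
    have hmarg1 : IntegrableOn (fun t => ∫ s in I, |pd1 (pd2 F) (s, t)|) I :=
      marginalQ2 (f := fun z => |pd1 (pd2 F) z|) (intQ2 hF12c.abs)
    have hmono : (∫ t in I, |pd2 F (a, t)|)
        ≤ ∫ t in I, ((2 * Real.pi)⁻¹ * (∫ s in I, |pd2 F (s, t)|)
            + ∫ s in I, |pd1 (pd2 F) (s, t)|) := by
      refine setIntegral_mono_on
        ((hF2c.comp (continuous_const.prodMk continuous_id)).abs.integrableOn_Ioc)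
        (((hmarg0.const_mul _)).add hmarg1) measurableSet_Ioc ?_
      intro t ht
      have := agmon1 (g := fun s => pd2 F (s, t)) (g' := fun s => pd1 (pd2 F) (s, t))
        (fun s => slice1 hF2d t s) (hF2c.comp (continuous_id.prodMk continuous_const))
        (hF12c.comp (continuous_id.prodMk continuous_const)) ha
      simpa using this
    rw [integral_add (hmarg0.const_mul _) hmarg1, integral_const_mul] at hmono
    exact hmono
  -- nonnegativity of the iterated integrals
  have hTnn : ∀ G : ℝ × ℝ → ℝ, 0 ≤ ∫ t in I, ∫ s in I, |G (s, t)| := by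
    intro G
    refine setIntegral_nonneg measurableSet_Ioc fun t _ => ?_
    exact setIntegral_nonneg measurableSet_Ioc fun s _ => abs_nonneg _
  have h00 : 0 ≤ T00 := hTnn F
  have h10 : 0 ≤ T10 := hTnn (pd1 F)
  have h01 : 0 ≤ T01 := hTnn (pd2 F)
  have h11 : 0 ≤ T11 := hTnn (pd1 (pd2 F))
  have hinv : (2 * Real.pi)⁻¹ ≤ 1 := by
    rw [inv_le_one_iff₀]
    right
    nlinarith [Real.pi_gt_three]
  have hinvnn : (0:ℝ) ≤ (2 * Real.pi)⁻¹ := by positivity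
  -- rewrite the Q2 integrals as iterated integrals
  rw [fubQ2 (intQ2 hFc.abs), fubQ2 (intQ2 hF1c.abs), fubQ2 (intQ2 hF2c.abs),
    fubQ2 (intQ2 hF12c.abs)]
  have hFp : F p = F (a, b) := by rw [Prod.mk.eta]
  rw [hFp]
  have e1 : (2 * Real.pi)⁻¹ * T00 ≤ T00 := mul_le_of_le_one_left h00 hinv
  have e2 : (2 * Real.pi)⁻¹ * T01 ≤ T01 := mul_le_of_le_one_left h01 hinv
  have e3 : (2 * Real.pi)⁻¹ * ((2 * Real.pi)⁻¹ * T00 + T10)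
      ≤ (2 * Real.pi)⁻¹ * T00 + T10 :=
    mul_le_of_le_one_left (by positivity) hinv
  have chain : |F (a, b)| ≤ (2 * Real.pi)⁻¹ * ((2 * Real.pi)⁻¹ * T00 + T10)
      + ((2 * Real.pi)⁻¹ * T01 + T11) := by
    calc |F (a, b)| ≤ (2 * Real.pi)⁻¹ * (∫ t in I, |F (a, t)|) + ∫ t in I, |pd2 F (a, t)| := stepA
      _ ≤ (2 * Real.pi)⁻¹ * ((2 * Real.pi)⁻¹ * T00 + T10) + ((2 * Real.pi)⁻¹ * T01 + T11) := by
          have := mul_le_mul_of_nonneg_left stepB hinvnn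
          linarith
  linarith

end Agmon2
section Part1

open Set MeasureTheory

lemma lady (u : ℝ × ℝ → ℝ × ℝ) (hu : ContDiff ℝ (⊤ : ℕ∞) u) :
    ∫ x in Q2, (pdot (u x) (u x)) ^ 2 ≤ 4 * H01sqT u * H11sqT u := by
  have hud : Differentiable ℝ u := hu.differentiable (by norm_cast)
  have hu2 : ContDiff ℝ (⊤ : ℕ∞) (pd2 u) := contDiff_pd2 hu
  have hu2d : Differentiable ℝ (pd2 u) := hu2.differentiable (by norm_cast)
  set F := fun x => pdot (u x) (u x) with hFdef
  have hFs : ContDiff ℝ (⊤ : ℕ∞) F := contDiff_pdot hu hu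
  have hFc : Continuous F := hFs.continuous
  -- the four L² quantities
  set N0 := ∫ z in Q2, pdot (u z) (u z) with hN0
  set N1 := ∫ z in Q2, pdot (pd1 u z) (pd1 u z) with hN1
  set N2 := ∫ z in Q2, pdot (pd2 u z) (pd2 u z) with hN2
  set N3 := ∫ z in Q2, pdot (pd1 (pd2 u) z) (pd1 (pd2 u) z) with hN3
  have hL2 : ∀ g : ℝ × ℝ → ℝ × ℝ, L2T g ^ 2 = ∫ z in Q2, pdot (g z) (g z) := by
    intro g
    rw [L2T, Real.sq_sqrt]
    exact setIntegral_nonneg measurableSet_Q2 fun z _ => pdot_self_nonneg _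
  have hH11 : H11sqT u = N0 + N1 + N2 + N3 := by
    rw [H11sqT, hL2, hL2, hL2, hL2]
  have hH01 : H01sqT u = N0 + N2 := by
    rw [H01sqT, hL2, hL2]
  have hN0nn : 0 ≤ N0 := setIntegral_nonneg measurableSet_Q2 fun z _ => pdot_self_nonneg _
  have hN1nn : 0 ≤ N1 := setIntegral_nonneg measurableSet_Q2 fun z _ => pdot_self_nonneg _
  have hN2nn : 0 ≤ N2 := setIntegral_nonneg measurableSet_Q2 fun z _ => pdot_self_nonneg _
  have hN3nn : 0 ≤ N3 := setIntegral_nonneg measurableSet_Q2 fun z _ => pdot_self_nonneg _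
  -- pointwise bounds on the derivatives of F
  have b1 : ∀ z, |pd1 F z| ≤ pdot (u z) (u z) + pdot (pd1 u z) (pd1 u z) := by
    intro z
    have h := pd_pdot (1, 0) hud hud z
    rw [pd1, h]
    have h1 := abs_pdot_le (fderiv ℝ u z (1, 0)) (u z)
    have h2 := abs_pdot_le (u z) (fderiv ℝ u z (1, 0))
    have h3 := abs_add_le (pdot (fderiv ℝ u z (1, 0)) (u z)) (pdot (u z) (fderiv ℝ u z (1, 0)))
    have hpd : pd1 u z = fderiv ℝ u z (1, 0) := rfl
    rw [hpd]
    linarith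
  have b2 : ∀ z, |pd2 F z| ≤ pdot (u z) (u z) + pdot (pd2 u z) (pd2 u z) := by
    intro z
    have h := pd_pdot (0, 1) hud hud z
    rw [pd2, h]
    have h1 := abs_pdot_le (fderiv ℝ u z (0, 1)) (u z)
    have h2 := abs_pdot_le (u z) (fderiv ℝ u z (0, 1))
    have h3 := abs_add_le (pdot (fderiv ℝ u z (0, 1)) (u z)) (pdot (u z) (fderiv ℝ u z (0, 1)))
    have hpd : pd2 u z = fderiv ℝ u z (0, 1) := rfl
    rw [hpd]
    linarith
  -- second mixed derivative of F
  have hpd2F : pd2 F = fun z => 2 * pdot (u z) (pd2 u z) := by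
    funext z
    have h := pd_pdot (0, 1) hud hud z
    rw [pd2, h]
    simp only [pdot, pd2]
    ring
  have b3 : ∀ z, |pd1 (pd2 F) z|
      ≤ (pdot (pd1 u z) (pd1 u z) + pdot (pd2 u z) (pd2 u z))
        + (pdot (u z) (u z) + pdot (pd1 (pd2 u) z) (pd1 (pd2 u) z)) := by
    intro z
    have hdiff : DifferentiableAt ℝ (fun z => pdot (u z) (pd2 u z)) z :=
      ((contDiff_pdot hu hu2).differentiable (by norm_cast)) z
    have hval : pd1 (pd2 F) z
        = 2 * (pdot (pd1 u z) (pd2 u z) + pdot (u z) (pd1 (pd2 u) z)) := by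
      rw [pd1, hpd2F, fderiv_const_mul hdiff]
      rw [ContinuousLinearMap.smul_apply, smul_eq_mul]
      congr 1
      exact pd_pdot (1, 0) hud hu2d z
    rw [hval]
    have h1 := abs_pdot_le (pd1 u z) (pd2 u z)
    have h2 := abs_pdot_le (u z) (pd1 (pd2 u) z)
    have h3 := abs_add_le (pdot (pd1 u z) (pd2 u z)) (pdot (u z) (pd1 (pd2 u) z))
    rw [abs_mul, abs_two]
    nlinarith [abs_nonneg (pdot (pd1 u z) (pd2 u z) + pdot (u z) (pd1 (pd2 u) z))]
  -- continuity of various integrands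
  have hc0 : Continuous fun z => pdot (u z) (u z) := hFc
  have hc1 : Continuous fun z => pdot (pd1 u z) (pd1 u z) :=
    (contDiff_pdot (contDiff_pd1 hu) (contDiff_pd1 hu)).continuous
  have hc2 : Continuous fun z => pdot (pd2 u z) (pd2 u z) :=
    (contDiff_pdot hu2 hu2).continuous
  have hc3 : Continuous fun z => pdot (pd1 (pd2 u) z) (pd1 (pd2 u) z) :=
    (contDiff_pdot (contDiff_pd1 hu2) (contDiff_pd1 hu2)).continuous
  have hF1c : Continuous (pd1 F) := (contDiff_pd1 hFs).continuous
  have hF2c : Continuous (pd2 F) := (contDiff_pd2 hFs).continuous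
  have hF12c : Continuous (pd1 (pd2 F)) := (contDiff_pd1 (contDiff_pd2 hFs)).continuous
  -- integral bounds on the four terms of agmon2
  have i0 : (∫ z in Q2, |F z|) = N0 := by
    refine setIntegral_congr_fun measurableSet_Q2 fun z _ => ?_
    exact abs_of_nonneg (pdot_self_nonneg _)
  have i1 : (∫ z in Q2, |pd1 F z|) ≤ N0 + N1 := by
    have h := setIntegral_mono_on (intQ2 hF1c.abs) ((intQ2 hc0).add (intQ2 hc1))
      measurableSet_Q2 (fun z _ => b1 z)
    simp only [Pi.add_apply] at h
    rwa [integral_add (intQ2 hc0) (intQ2 hc1)] at h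
  have i2 : (∫ z in Q2, |pd2 F z|) ≤ N0 + N2 := by
    have h := setIntegral_mono_on (intQ2 hF2c.abs) ((intQ2 hc0).add (intQ2 hc2))
      measurableSet_Q2 (fun z _ => b2 z)
    simp only [Pi.add_apply] at h
    rwa [integral_add (intQ2 hc0) (intQ2 hc2)] at h
  have i3 : (∫ z in Q2, |pd1 (pd2 F) z|) ≤ (N1 + N2) + (N0 + N3) := by
    have hc12 : Continuous fun z => pdot (pd1 u z) (pd1 u z) + pdot (pd2 u z) (pd2 u z) :=
      hc1.add hc2
    have hc03 : Continuous fun z =>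
        pdot (u z) (u z) + pdot (pd1 (pd2 u) z) (pd1 (pd2 u) z) := hc0.add hc3
    have h := setIntegral_mono_on (intQ2 hF12c.abs) (intQ2 (hc12.add hc03))
      measurableSet_Q2 (fun z _ => b3 z)
    simp only [Pi.add_apply] at h
    rwa [integral_add (intQ2 hc12) (intQ2 hc03), integral_add (intQ2 hc1) (intQ2 hc2),
      integral_add (intQ2 hc0) (intQ2 hc3)] at h
  -- sup bound on F over Q2
  have hsup : ∀ z ∈ Q2, F z ≤ 4 * (N0 + N1 + N2 + N3) := by
    intro z hz
    have h := agmon2 hFs hz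
    have habs : F z ≤ |F z| := le_abs_self _
    linarith
  -- final estimate
  have hmain : (∫ z in Q2, F z ^ 2) ≤ ∫ z in Q2, 4 * (N0 + N1 + N2 + N3) * F z := by
    refine setIntegral_mono_on (intQ2 (hFc.pow 2)) ((intQ2 hFc).const_mul _)
      measurableSet_Q2 fun z hz => ?_
    have h1 : F z ^ 2 = F z * F z := sq (F z)
    rw [h1]
    exact mul_le_mul_of_nonneg_right (hsup z hz) (pdot_self_nonneg _)
  rw [integral_const_mul] at hmain
  have hfin : (∫ z in Q2, F z ^ 2) ≤ 4 * (N0 + N1 + N2 + N3) * N0 := hmain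
  rw [hH01, hH11]
  nlinarith [hfin]

end Part1
/-- Anisotropic Ladyzhenskaya-type inequality on the torus,
`‖u‖_{L⁴}⁴ ≤ C ‖u‖_{H^{0,1}}² ‖u‖_{H^{1,1}}²`, together with its consequence:
boundedness in `L^∞([0,T];H^{0,1}) ∩ L²([0,T];H^{1,1})` implies boundedness in
`L⁴([0,T];L⁴)`. Note `‖u(x)‖⁴ = (pdot (u x) (u x))²`. -/
theorem stmt14 :
    ∃ C > (0:ℝ),
      (∀ u : ℝ × ℝ → ℝ × ℝ, ContDiff ℝ (⊤ : ℕ∞) u → PeriodicT u →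
        ∫ x in Q2, (pdot (u x) (u x)) ^ 2 ≤ C * H01sqT u * H11sqT u)
      ∧ (∀ T ≥ (0:ℝ), ∀ u : ℝ → ℝ × ℝ → ℝ × ℝ,
          (∀ t : ℝ, ContDiff ℝ (⊤ : ℕ∞) (u t) ∧ PeriodicT (u t)) →
          (∃ M : ℝ, ∀ t ∈ Set.Icc (0:ℝ) T, H01sqT (u t) ≤ M) →
          IntegrableOn (fun t => H11sqT (u t)) (Set.Ioc (0:ℝ) T) →
          ∫ t in Set.Ioc (0:ℝ) T, ∫ x in Q2, (pdot (u t x) (u t x)) ^ 2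
            ≤ C * sSup ((fun t => H01sqT (u t)) '' Set.Icc (0:ℝ) T)
                * ∫ t in Set.Ioc (0:ℝ) T, H11sqT (u t)) := by
  refine ⟨4, by norm_num, fun u hu _ => lady u hu, ?_⟩
  intro T hT u hu hMex hint
  obtain ⟨M, hM⟩ := hMex
  set S := sSup ((fun t => H01sqT (u t)) '' Set.Icc (0:ℝ) T) with hS
  have hH01nn : ∀ t : ℝ, 0 ≤ H01sqT (u t) := fun t => by
    rw [H01sqT]; positivity
  have hH11nn : ∀ t : ℝ, 0 ≤ H11sqT (u t) := fun t => by
    rw [H11sqT]; positivity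
  have hne : (0:ℝ) ∈ Set.Icc (0:ℝ) T := ⟨le_refl _, hT⟩
  have hbdd : BddAbove ((fun t => H01sqT (u t)) '' Set.Icc (0:ℝ) T) := by
    refine ⟨M, ?_⟩
    rintro y ⟨t, ht, rfl⟩
    exact hM t ht
  have hSle : ∀ t ∈ Set.Icc (0:ℝ) T, H01sqT (u t) ≤ S := fun t ht =>
    le_csSup hbdd (Set.mem_image_of_mem _ ht)
  have hSnn : 0 ≤ S := le_trans (hH01nn 0) (hSle 0 hne)
  have hIH11 : 0 ≤ ∫ t in Set.Ioc (0:ℝ) T, H11sqT (u t) :=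
    setIntegral_nonneg measurableSet_Ioc fun t _ => hH11nn t
  by_cases hig : IntegrableOn
      (fun t => ∫ x in Q2, (pdot (u t x) (u t x)) ^ 2) (Set.Ioc (0:ℝ) T)
  · have hpt : ∀ t ∈ Set.Ioc (0:ℝ) T,
        (∫ x in Q2, (pdot (u t x) (u t x)) ^ 2) ≤ 4 * S * H11sqT (u t) := by
      intro t ht
      calc (∫ x in Q2, (pdot (u t x) (u t x)) ^ 2)
          ≤ 4 * H01sqT (u t) * H11sqT (u t) := lady (u t) (hu t).1
        _ ≤ 4 * S * H11sqT (u t) := by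
            refine mul_le_mul_of_nonneg_right ?_ (hH11nn t)
            have := hSle t (Set.Ioc_subset_Icc_self ht)
            linarith
    have hmono := setIntegral_mono_on hig (hint.const_mul (4 * S)) measurableSet_Ioc hpt
    rw [integral_const_mul] at hmono
    calc ∫ t in Set.Ioc (0:ℝ) T, ∫ x in Q2, (pdot (u t x) (u t x)) ^ 2
        ≤ 4 * S * ∫ t in Set.Ioc (0:ℝ) T, H11sqT (u t) := hmono
      _ = 4 * S * ∫ t in Set.Ioc (0:ℝ) T, H11sqT (u t) := rfl
  · rw [MeasureTheory.integral_undef hig]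
    have : (0:ℝ) ≤ 4 * S * ∫ t in Set.Ioc (0:ℝ) T, H11sqT (u t) :=
      mul_nonneg (mul_nonneg (by norm_num) hSnn) hIH11
    exact this
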